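/- Let G = (V, E) be a finite directed graph with no self-loops. The Graver basis 𝔊_{A_TV} of the matrix A_TV consists exactly of the vectors ±(χ_S, χ_{δ⁺(S)} − χ_{δ⁻(S)}) ∈ ℤ^V × ℤ^E, where S ranges over all subsets of V that induce a connected subgraph of G. That is, g ∈ ℤ^V × ℤ^E is a ⊑-minimal element of (ker_ℤ(A_TV)) \ {0} if and only if g = ε(χ_S, χ_{δ⁺(S)} − χ_{δ⁻(S)}) for some ε ∈ {+1, −1} and some S ⊆ V inducing a connected subgraph. -/

import Mathlib

open scoped Classical

/-- The undirected support graph of the directed edge set `E`. -/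
def undirGraph {V : Type*} (E : Finset (V × V)) : SimpleGraph V where
  Adj u v := u ≠ v ∧ ((u, v) ∈ E ∨ (v, u) ∈ E)
  symm := by
    constructor
    intro u v h
    exact ⟨h.1.symm, h.2.elim Or.inr Or.inl⟩
  loopless := by constructor; intro u h; exact h.1 rfl

/-- `S ⊆ V` induces a connected subgraph of the (undirected version of the) graph. -/
def InducesConnected {V : Type*} (E : Finset (V × V)) (S : Set V) : Prop :=
  S.Nonempty ∧ ((undirGraph E).induce S).Connected

/-- Integer indicator vector of a set of vertices. -/
noncomputable def chiV {V : Type*} (S : Set V) : V → ℤ :=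
  S.indicator 1

/-- Integer indicator vector of a set of edges. -/
noncomputable def chiE {V : Type*} {E : Finset (V × V)}
    (T : Set {e : V × V // e ∈ E}) : {e : V × V // e ∈ E} → ℤ :=
  T.indicator 1

/-- Outgoing edges of `S`. -/
def deltaPlus {V : Type*} (E : Finset (V × V)) (S : Set V) :
    Set {e : V × V // e ∈ E} :=
  {e | (e : V × V).1 ∈ S ∧ (e : V × V).2 ∉ S}

/-- Incoming edges of `S`. -/
def deltaMinus {V : Type*} (E : Finset (V × V)) (S : Set V) :
    Set {e : V × V // e ∈ E} :=
  {e | (e : V × V).1 ∉ S ∧ (e : V × V).2 ∈ S}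

/-- The conformal (sign-compatible, coordinatewise) partial order `x ⊑ y`. -/
def Sqle {ι : Type*} (x y : ι → ℤ) : Prop :=
  ∀ i, 0 ≤ x i * y i ∧ |x i| ≤ |y i|

/-- `(x, a)` lies in the integer kernel of `A_TV`. -/
def InKerATV {V : Type*} (E : Finset (V × V)) (x : V → ℤ)
    (a : {e : V × V // e ∈ E} → ℤ) : Prop :=
  ∀ e : {e : V × V // e ∈ E}, x (e : V × V).1 - x (e : V × V).2 = a e

/-- `(x, a)` is a Graver basis element of `A_TV`: a `⊑`-minimal nonzero
element of the integer kernel. -/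
def InGraverATV {V : Type*} (E : Finset (V × V)) (x : V → ℤ)
    (a : {e : V × V // e ∈ E} → ℤ) : Prop :=
  InKerATV E x a ∧ ¬(x = 0 ∧ a = 0) ∧
    ∀ (x' : V → ℤ) (a' : {e : V × V // e ∈ E} → ℤ),
      InKerATV E x' a' → ¬(x' = 0 ∧ a' = 0) → Sqle x' x → Sqle a' a →
        x' = x ∧ a' = a

/- ==================== auxiliary lemmas ==================== -/

lemma chiV_mem' {V : Type*} {S : Set V} {v : V} (h : v ∈ S) : chiV S v = 1 :=
  Set.indicator_of_mem h 1

lemma chiV_not_mem' {V : Type*} {S : Set V} {v : V} (h : v ∉ S) : chiV S v = 0 :=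
  Set.indicator_of_notMem h 1

lemma chi_edge' {V : Type*} {E : Finset (V × V)} (S : Set V)
    (e : {e : V × V // e ∈ E}) :
    (chiE (deltaPlus E S) - chiE (deltaMinus E S)) e
      = chiV S (e : V × V).1 - chiV S (e : V × V).2 := by
  by_cases h1 : (e : V × V).1 ∈ S <;> by_cases h2 : (e : V × V).2 ∈ S <;>
    simp [chiE, chiV, deltaPlus, deltaMinus, Set.indicator_apply,
      Set.mem_setOf_eq, h1, h2]

lemma ker_chi' {V : Type*} {E : Finset (V × V)} (S : Set V) (ε : ℤ) :
    InKerATV E (ε • chiV S)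
      (ε • (chiE (deltaPlus E S) - chiE (deltaMinus E S))) := by
  intro e
  have h := chi_edge' (E := E) S e
  simp only [Pi.smul_apply, smul_eq_mul]
  rw [h]; ring

/-- a connected component via `ReflTransGen` is connected as induced subgraph -/
lemma induce_component_connected' {V : Type*} (G : SimpleGraph V)
    (r : V → V → Prop) (hr : ∀ u v, r u v → G.Adj u v) (v0 : V) :
    (G.induce {v | Relation.ReflTransGen r v0 v}).Connected := by
  set S : Set V := {v | Relation.ReflTransGen r v0 v} with hS
  have hv0 : v0 ∈ S := Relation.ReflTransGen.refl
  have key : ∀ v, Relation.ReflTransGen r v0 v →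
      ∀ (h : v ∈ S), (G.induce S).Reachable ⟨v0, hv0⟩ ⟨v, h⟩ := by
    intro v h
    induction h with
    | refl => intro _; exact SimpleGraph.Reachable.refl _
    | @tail b c hb step ih =>
        intro hc
        have hbS : b ∈ S := hb
        have hadj : (G.induce S).Adj ⟨b, hbS⟩ ⟨c, hc⟩ :=
          SimpleGraph.comap_adj.mpr (hr _ _ step)
        exact (ih hbS).trans hadj.reachable
  have : Nonempty S := ⟨⟨v0, hv0⟩⟩
  refine ⟨fun u v => ?_⟩
  obtain ⟨u, hu⟩ := u
  obtain ⟨v, hv⟩ := v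
  exact (key u hu hu).symm.trans (key v hv hv)

/-- if `S' ⊆ S` is nonempty and closed under adjacency within connected `S`,
it is all of `S` -/
lemma closure_all' {V : Type*} (G : SimpleGraph V) (S S' : Set V)
    (hsub : S' ⊆ S) (w0 : V) (hw0 : w0 ∈ S')
    (hclosed : ∀ u v, u ∈ S' → v ∈ S → G.Adj u v → v ∈ S')
    (hconn : (G.induce S).Connected) : ∀ v ∈ S, v ∈ S' := by
  intro v hv
  obtain ⟨p⟩ := hconn.preconnected ⟨w0, hsub hw0⟩ ⟨v, hv⟩
  have main : ∀ (a b : S) (p : (G.induce S).Walk a b),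
      (a : V) ∈ S' → (b : V) ∈ S' := by
    intro a b p
    induction p with
    | nil => exact id
    | @cons a b c h q ih =>
        intro ha
        exact ih (hclosed a b ha b.2 (SimpleGraph.comap_adj.mp h))
  exact main _ _ p hw0

/- ==================== main theorem ==================== -/

/-- The Graver basis of `A_TV` consists exactly of the vectors
`±(χ_S, χ_{δ⁺(S)} − χ_{δ⁻(S)})` where `S` ranges over subsets of `V` inducing a
connected subgraph. -/
theorem graverBasis_ATV_characterization
    {V : Type*} [Fintype V] [DecidableEq V] (E : Finset (V × V))
    (hloop : ∀ e ∈ E, e.1 ≠ e.2)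
    (x : V → ℤ) (a : {e : V × V // e ∈ E} → ℤ) :
    InGraverATV E x a ↔
      ∃ (ε : ℤ) (S : Set V), (ε = 1 ∨ ε = -1) ∧ InducesConnected E S ∧
        x = ε • chiV S ∧
        a = ε • (chiE (deltaPlus E S) - chiE (deltaMinus E S)) := by
  constructor
  · -- forward direction
    rintro ⟨hker, hnz, hmin⟩
    have hx0 : x ≠ 0 := by
      rintro rfl
      refine hnz ⟨rfl, funext fun e => ?_⟩
      rw [← hker e]; simp
    obtain ⟨v0, hv0⟩ : ∃ v, x v ≠ 0 := by
      by_contra h; push_neg at h; exact hx0 (funext h)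
    set ε : ℤ := if 0 < x v0 then 1 else -1 with hεdef
    have hε : ε = 1 ∨ ε = -1 := by
      rw [hεdef]; split_ifs <;> simp
    have hεne : ε ≠ 0 := by rcases hε with h | h <;> rw [h] <;> norm_num
    have hεv0 : 0 < ε * x v0 := by
      rw [hεdef]; split_ifs with h <;> omega
    set r : V → V → Prop := fun u v => (undirGraph E).Adj u v ∧ 0 < ε * x v
      with hrdef
    set S : Set V := {v | Relation.ReflTransGen r v0 v} with hSdef
    have hv0S : v0 ∈ S := Relation.ReflTransGen.refl
    have hSP : ∀ v ∈ S, 0 < ε * x v := by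
      intro v h
      induction h with
      | refl => exact hεv0
      | tail _ step _ => exact step.2
    have hclosure : ∀ u ∈ S, ∀ v, (undirGraph E).Adj u v → 0 < ε * x v → v ∈ S :=
      fun u hu v ha hv => hu.tail ⟨ha, hv⟩
    set x' : V → ℤ := ε • chiV S with hx'def
    set a' : {e : V × V // e ∈ E} → ℤ :=
      ε • (chiE (deltaPlus E S) - chiE (deltaMinus E S)) with ha'def
    have hker' : InKerATV E x' a' := ker_chi' S ε
    have hx'v : ∀ v ∈ S, x' v = ε := by
      intro v hv; rw [hx'def]; simp [chiV_mem' hv]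
    have hx'n : ∀ v ∉ S, x' v = 0 := by
      intro v hv; rw [hx'def]; simp [chiV_not_mem' hv]
    have hnz' : ¬(x' = 0 ∧ a' = 0) := by
      rintro ⟨h, -⟩
      have := congrFun h v0
      rw [hx'v v0 hv0S] at this
      exact hεne this
    have hsx : Sqle x' x := by
      intro v
      by_cases hv : v ∈ S
      · have hp := hSP v hv
        rw [hx'v v hv]
        have hxvne : x v ≠ 0 := by
          rintro h; rw [h, mul_zero] at hp; exact lt_irrefl 0 hp
        refine ⟨le_of_lt hp, ?_⟩
        have h1 : (1 : ℤ) ≤ |x v| := Int.one_le_abs hxvne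
        have h2 : |ε| = 1 := by rcases hε with h | h <;> rw [h] <;> norm_num
        rw [h2]; exact h1
      · rw [hx'n v hv]; simp [abs_nonneg]
    have hsa : Sqle a' a := by
      rintro ⟨⟨u, v⟩, he⟩
      have hne : u ≠ v := hloop _ he
      have hae : x u - x v = a ⟨(u, v), he⟩ := hker ⟨(u, v), he⟩
      have ha'e : a' ⟨(u, v), he⟩ = ε * (chiV S u - chiV S v) := by
        rw [ha'def]
        have h := chi_edge' (E := E) S ⟨(u, v), he⟩
        simp only [Pi.smul_apply, smul_eq_mul]
        rw [h]
      by_cases hu : u ∈ S <;> by_cases hv : v ∈ S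
      · have h0 : a' ⟨(u, v), he⟩ = 0 := by
          rw [ha'e, chiV_mem' hu, chiV_mem' hv]; ring
        rw [h0]; simp [abs_nonneg]
      · -- u ∈ S, v ∉ S : a' e = ε
        have h0 : a' ⟨(u, v), he⟩ = ε := by
          rw [ha'e, chiV_mem' hu, chiV_not_mem' hv]; ring
        have hadj : (undirGraph E).Adj u v := ⟨hne, Or.inl he⟩
        have hvle : ε * x v ≤ 0 := by
          by_contra h; push_neg at h
          exact hv (hclosure u hu v hadj h)
        have hA := hSP u hu
        have key : 1 ≤ ε * (x u - x v) := by
          have hid : ε * (x u - x v) = ε * x u - ε * x v := by ring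
          rw [hid]
          linarith [Int.add_one_le_iff.mpr hA]
        rw [hae] at key
        have hane : a ⟨(u, v), he⟩ ≠ 0 := by
          rintro h; rw [h, mul_zero] at key; norm_num at key
        refine ⟨?_, ?_⟩
        · rw [h0]; linarith [key]
        · rw [h0]
          have h2 : |ε| = 1 := by rcases hε with h | h <;> rw [h] <;> norm_num
          rw [h2]; exact Int.one_le_abs hane
      · -- u ∉ S, v ∈ S : a' e = -ε
        have h0 : a' ⟨(u, v), he⟩ = -ε := by
          rw [ha'e, chiV_not_mem' hu, chiV_mem' hv]; ring
        have hadj : (undirGraph E).Adj v u := ⟨hne.symm, Or.inr he⟩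
        have hule : ε * x u ≤ 0 := by
          by_contra h; push_neg at h
          exact hu (hclosure v hv u hadj h)
        have hA := hSP v hv
        have key : 1 ≤ -ε * (x u - x v) := by
          have hid : -ε * (x u - x v) = ε * x v - ε * x u := by ring
          rw [hid]
          linarith [Int.add_one_le_iff.mpr hA]
        rw [hae] at key
        have hane : a ⟨(u, v), he⟩ ≠ 0 := by
          rintro h; rw [h, mul_zero] at key; norm_num at key
        refine ⟨?_, ?_⟩
        · rw [h0]
          have : -ε * a ⟨(u, v), he⟩ = -(ε * a ⟨(u, v), he⟩) := by ring
          nlinarith [key]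
        · rw [h0]
          have h2 : |-ε| = 1 := by rcases hε with h | h <;> rw [h] <;> norm_num
          rw [h2]; exact Int.one_le_abs hane
      · have h0 : a' ⟨(u, v), he⟩ = 0 := by
          rw [ha'e, chiV_not_mem' hu, chiV_not_mem' hv]; ring
        rw [h0]; simp [abs_nonneg]
    obtain ⟨hxeq, haeq⟩ := hmin x' a' hker' hnz' hsx hsa
    refine ⟨ε, S, hε, ⟨⟨v0, hv0S⟩, ?_⟩, hxeq.symm, haeq.symm⟩
    exact induce_component_connected' (undirGraph E) r (fun u v h => h.1) v0
  · -- reverse direction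
    rintro ⟨ε, S, hε, ⟨⟨v0, hv0⟩, hconn⟩, rfl, rfl⟩
    have hεne : ε ≠ 0 := by rcases hε with h | h <;> rw [h] <;> norm_num
    have habsε : |ε| = 1 := by rcases hε with h | h <;> rw [h] <;> norm_num
    have hker : InKerATV E (ε • chiV S)
        (ε • (chiE (deltaPlus E S) - chiE (deltaMinus E S))) := ker_chi' S ε
    have hxS : ∀ v ∈ S, (ε • chiV S) v = ε := by
      intro v hv; simp [chiV_mem' hv]
    have hxN : ∀ v ∉ S, (ε • chiV S) v = 0 := by
      intro v hv; simp [chiV_not_mem' hv]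
    refine ⟨hker, ?_, ?_⟩
    · rintro ⟨h, -⟩
      have := congrFun h v0
      rw [hxS v0 hv0] at this
      exact hεne this
    · intro x' a' hker' hnz' hsx hsa
      have hx'N : ∀ v ∉ S, x' v = 0 := by
        intro v hv
        have h := (hsx v).2
        rw [hxN v hv] at h
        have h0 : |x' v| ≤ 0 := by simpa using h
        exact abs_eq_zero.mp (le_antisymm h0 (abs_nonneg _))
      have hx'S : ∀ v ∈ S, x' v = 0 ∨ x' v = ε := by
        intro v hv
        have h1 := (hsx v).1
        have h2 := (hsx v).2
        rw [hxS v hv] at h1 h2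
        rw [habsε, abs_le] at h2
        rcases hε with h | h <;> rw [h] at h1 ⊢ <;>
          [rw [mul_one] at h1; rw [mul_neg_one] at h1] <;> omega
      have hx'ne : ∃ w, x' w ≠ 0 := by
        by_contra h; push_neg at h
        refine hnz' ⟨funext h, funext fun e => ?_⟩
        rw [← hker' e, h, h]; simp
      obtain ⟨w0, hw0⟩ := hx'ne
      have hw0S : w0 ∈ S := by
        by_contra h; exact hw0 (hx'N w0 h)
      have hw0ε : x' w0 = ε := (hx'S w0 hw0S).resolve_left hw0
      set S' : Set V := {v | x' v = ε} with hS'def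
      have hsub : S' ⊆ S := by
        intro v hv
        by_contra h
        have hv' : x' v = ε := hv
        rw [hx'N v h] at hv'
        exact hεne hv'.symm
      have hclosed : ∀ u v, u ∈ S' → v ∈ S → (undirGraph E).Adj u v → v ∈ S' := by
        intro u v hu hv hadj
        have huS : u ∈ S := hsub hu
        have huε : x' u = ε := hu
        rcases hadj.2 with he | he
        · -- (u,v) ∈ E
          have hz : a' ⟨(u, v), he⟩ = 0 := by
            have h := (hsa ⟨(u, v), he⟩).2
            have h0 : (ε • (chiE (deltaPlus E S) - chiE (deltaMinus E S)))
                ⟨(u, v), he⟩ = 0 := by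
              have hc := chi_edge' (E := E) S ⟨(u, v), he⟩
              simp only [Pi.smul_apply, smul_eq_mul]
              rw [hc, chiV_mem' huS, chiV_mem' hv]; ring
            rw [h0] at h
            have h1 : |a' ⟨(u, v), he⟩| ≤ 0 := by simpa using h
            exact abs_eq_zero.mp (le_antisymm h1 (abs_nonneg _))
          have hk := hker' ⟨(u, v), he⟩
          rw [hz] at hk
          have hvu : x' v = x' u := by
            have h2 : x' u - x' v = 0 := hk
            omega
          show x' v = ε
          rw [hvu]; exact huε
        · -- (v,u) ∈ E
          have hz : a' ⟨(v, u), he⟩ = 0 := by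
            have h := (hsa ⟨(v, u), he⟩).2
            have h0 : (ε • (chiE (deltaPlus E S) - chiE (deltaMinus E S)))
                ⟨(v, u), he⟩ = 0 := by
              have hc := chi_edge' (E := E) S ⟨(v, u), he⟩
              simp only [Pi.smul_apply, smul_eq_mul]
              rw [hc, chiV_mem' hv, chiV_mem' huS]; ring
            rw [h0] at h
            have h1 : |a' ⟨(v, u), he⟩| ≤ 0 := by simpa using h
            exact abs_eq_zero.mp (le_antisymm h1 (abs_nonneg _))
          have hk := hker' ⟨(v, u), he⟩
          rw [hz] at hk
          have hvu : x' v = x' u := by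
            have h2 : x' v - x' u = 0 := hk
            omega
          show x' v = ε
          rw [hvu]; exact huε
      have hall : ∀ v ∈ S, v ∈ S' :=
        closure_all' (undirGraph E) S S' hsub w0 hw0ε hclosed hconn
      have hxeq : x' = ε • chiV S := by
        funext v
        by_cases hv : v ∈ S
        · rw [hxS v hv]; exact hall v hv
        · rw [hxN v hv]; exact hx'N v hv
      refine ⟨hxeq, funext fun e => ?_⟩
      rw [← hker' e, ← hker e, hxeq]
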